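/- Let I ⊆ K[x_0, …, x_N] be the radical ideal of a finite nonempty set of distinct points in P^N. If I^{(t(m+N−1))} ⊆ M^{t(N−1)} (I^{(m)})^t holds for all positive integers m and t, then (α(I^{(m)}) + N − 1)/(m + N − 1) ≤ α(I^{(t)})/t holds for all positive integers m and t. -/

import Mathlib

open MvPolynomial

noncomputable section

/-- The ideal generated by all homogeneous forms vanishing at the point with
coordinate vector `p`. -/
def homVanishingIdeal {K σ : Type*} [Field K] (p : σ → K) : Ideal (MvPolynomial σ K) :=
  Ideal.span {F : MvPolynomial σ K | (∃ d, F.IsHomogeneous d) ∧ MvPolynomial.eval p F = 0}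

/-- The `m`-th symbolic power of the radical ideal of the finite set of points
with coordinate vectors `P i`: the intersection of the `m`-th powers of the
ideals of the individual points. -/
def symbPow {K σ ι : Type*} [Field K] (P : ι → σ → K) (m : ℕ) : Ideal (MvPolynomial σ K) :=
  ⨅ i, homVanishingIdeal (P i) ^ m

/-- The irrelevant maximal ideal `M = (x_0, …, x_N)`. -/
def irrel (K σ : Type*) [Field K] : Ideal (MvPolynomial σ K) :=
  Ideal.span (Set.range (MvPolynomial.X : σ → MvPolynomial σ K))

/-- The coordinate vectors `P i` are nonzero and represent pairwise distinct
points of projective space (no two are proportional). -/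
def ProjectivelyDistinct {K σ ι : Type*} [Field K] (P : ι → σ → K) : Prop :=
  (∀ i, P i ≠ 0) ∧ Pairwise fun i j => ∀ c : K, P i ≠ c • P j

/-- `α(J)`: the least degree of a nonzero homogeneous element of `J`. -/
def idealAlpha {K σ : Type*} [Field K] (J : Ideal (MvPolynomial σ K)) : ℕ :=
  sInf {d : ℕ | ∃ F ∈ J, F ≠ 0 ∧ MvPolynomial.IsHomogeneous F d}
namespace Stmt5Aux

attribute [local instance] MvPolynomial.gradedAlgebra

variable {K σ : Type*} [Field K]

lemma decompose_eq (f : MvPolynomial σ K) (i : ℕ) :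
    (DirectSum.decompose (homogeneousSubmodule σ K) f i : MvPolynomial σ K) =
      homogeneousComponent i f :=
  MvPolynomial.decomposition.decompose'_apply f i

lemma homog_vanishing (p : σ → K) :
    (homVanishingIdeal p).IsHomogeneous (homogeneousSubmodule σ K) := by
  apply Ideal.homogeneous_span
  rintro x ⟨⟨d, hd⟩, -⟩
  exact ⟨d, hd⟩

lemma homog_pow {I : Ideal (MvPolynomial σ K)}
    (hI : I.IsHomogeneous (homogeneousSubmodule σ K)) (k : ℕ) :
    (I ^ k).IsHomogeneous (homogeneousSubmodule σ K) := by
  induction k with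
  | zero => simpa [Ideal.one_eq_top] using Ideal.IsHomogeneous.top (homogeneousSubmodule σ K)
  | succ k ih => rw [pow_succ]; exact ih.mul hI

lemma homog_symbPow {ι : Type*} (P : ι → σ → K) (m : ℕ) :
    (symbPow P m).IsHomogeneous (homogeneousSubmodule σ K) :=
  Ideal.IsHomogeneous.iInf fun i => homog_pow (homog_vanishing (P i)) m

lemma homog_irrel :
    (irrel K σ).IsHomogeneous (homogeneousSubmodule σ K) := by
  apply Ideal.homogeneous_span
  rintro x ⟨i, rfl⟩
  exact ⟨1, isHomogeneous_X K i⟩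

/-- `AlphaGE I c`: every nonzero homogeneous element of `I` has degree ≥ `c`. -/
def AlphaGE (I : Ideal (MvPolynomial σ K)) (c : ℕ) : Prop :=
  ∀ F ∈ I, ∀ d : ℕ, F ≠ 0 → MvPolynomial.IsHomogeneous F d → c ≤ d

lemma component_mul_eq_zero {A B : Ideal (MvPolynomial σ K)}
    (hA : A.IsHomogeneous (homogeneousSubmodule σ K))
    (hB : B.IsHomogeneous (homogeneousSubmodule σ K))
    {a b d : ℕ} (hAa : AlphaGE A a) (hBb : AlphaGE B b) (hd : d < a + b) :
    ∀ F ∈ A * B, homogeneousComponent d F = 0 := by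
  intro F hF
  refine Submodule.mul_induction_on hF (fun f hf g hg => ?_)
    (fun x y hx hy => by rw [map_add, hx, hy, add_zero])
  have hfg : f * g =
      ∑ p ∈ Finset.range (f.totalDegree + 1), ∑ q ∈ Finset.range (g.totalDegree + 1),
        homogeneousComponent p f * homogeneousComponent q g := by
    rw [← Finset.sum_mul_sum, sum_homogeneousComponent, sum_homogeneousComponent]
  rw [hfg, map_sum]
  refine Finset.sum_eq_zero fun p _ => ?_
  rw [map_sum]
  refine Finset.sum_eq_zero fun q _ => ?_
  have hmem : homogeneousComponent p f * homogeneousComponent q g ∈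
      homogeneousSubmodule σ K (p + q) :=
    (homogeneousComponent_isHomogeneous p f).mul (homogeneousComponent_isHomogeneous q g)
  rw [homogeneousComponent_of_mem hmem]
  split_ifs with hdq
  · -- d = p + q < a + b : one of the factors vanishes
    subst hdq
    by_cases hp : p < a
    · have hfp : homogeneousComponent p f ∈ A := by
        have := hA p hf
        rwa [decompose_eq] at this
      by_cases h0 : homogeneousComponent p f = 0
      · rw [h0, zero_mul]
      · exact absurd (hAa _ hfp p h0 (homogeneousComponent_isHomogeneous p f)) (by omega)
    · have hq : q < b := by omega
      have hgq : homogeneousComponent q g ∈ B := by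
        have := hB q hg
        rwa [decompose_eq] at this
      by_cases h0 : homogeneousComponent q g = 0
      · rw [h0, mul_zero]
      · exact absurd (hBb _ hgq q h0 (homogeneousComponent_isHomogeneous q g)) (by omega)
  · rfl

lemma alphaGE_mul {A B : Ideal (MvPolynomial σ K)}
    (hA : A.IsHomogeneous (homogeneousSubmodule σ K))
    (hB : B.IsHomogeneous (homogeneousSubmodule σ K))
    {a b : ℕ} (hAa : AlphaGE A a) (hBb : AlphaGE B b) : AlphaGE (A * B) (a + b) := by
  intro F hF d hF0 hFd
  by_contra hlt
  push_neg at hlt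
  have h0 := component_mul_eq_zero hA hB hAa hBb hlt F hF
  rw [homogeneousComponent_of_mem (hFd : F ∈ homogeneousSubmodule σ K d)] at h0
  simp at h0
  exact hF0 h0

lemma alphaGE_pow {A : Ideal (MvPolynomial σ K)}
    (hA : A.IsHomogeneous (homogeneousSubmodule σ K))
    {a : ℕ} (hAa : AlphaGE A a) (t : ℕ) : AlphaGE (A ^ t) (t * a) := by
  induction t with
  | zero => intro F _ d _ _; simp
  | succ t ih =>
      have := alphaGE_mul (homog_pow hA t) hA ih hAa
      rw [← pow_succ] at this
      intro F hF d hF0 hFd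
      have h2 := this F hF d hF0 hFd
      calc (t + 1) * a = t * a + a := by ring
      _ ≤ d := h2

lemma alphaGE_irrel : AlphaGE (irrel K σ) 1 := by
  intro F hF d hF0 hFd
  by_contra hd
  push_neg at hd
  interval_cases d
  -- F homogeneous of degree 0 : F = C (coeff 0 F)
  have hFC : F = C (coeff 0 F) := by
    rw [← homogeneousComponent_zero,
      homogeneousComponent_of_mem (hFd : F ∈ homogeneousSubmodule σ K 0), if_pos rfl]
  have hker : irrel K σ ≤ RingHom.ker (constantCoeff : MvPolynomial σ K →+* K) := by
    rw [irrel, Ideal.span_le]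
    rintro x ⟨i, rfl⟩
    simp [RingHom.mem_ker]
  have : constantCoeff F = 0 := hker hF
  rw [constantCoeff_eq] at this
  rw [hFC, this, map_zero] at hF0
  exact hF0 rfl

lemma alphaGE_symbPow {ι : Type*} (P : ι → σ → K) (m : ℕ) :
    AlphaGE (symbPow P m) (idealAlpha (symbPow P m)) := by
  intro F hF d hF0 hFd
  exact Nat.sInf_le ⟨F, hF, hF0, hFd⟩
lemma exists_linear {K : Type*} [Field K] {N : ℕ} (hN : 1 ≤ N)
    (p : Fin (N + 1) → K) (hp : p ≠ 0) :
    ∃ L : MvPolynomial (Fin (N + 1)) K,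
      L ≠ 0 ∧ L.IsHomogeneous 1 ∧ L ∈ homVanishingIdeal p := by
  obtain ⟨j, hj⟩ := Function.ne_iff.mp hp
  have hj : p j ≠ 0 := hj
  have : Nontrivial (Fin (N + 1)) := by
    refine ⟨⟨0, by omega⟩, ⟨1, by omega⟩, ?_⟩
    intro hc
    have := congrArg Fin.val hc
    simp at this
  obtain ⟨j', hj'⟩ := exists_ne j
  refine ⟨C (p j) * X j' - C (p j') * X j, ?_, ?_, ?_⟩
  · intro h0
    have := congrArg (MvPolynomial.eval (fun k : Fin (N + 1) => if k = j' then (1 : K) else 0)) h0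
    simp [hj'.symm, hj] at this
  · exact (isHomogeneous_C_mul_X (p j) j').sub (isHomogeneous_C_mul_X (p j') j)
  · apply Ideal.subset_span
    refine ⟨⟨1, (isHomogeneous_C_mul_X (p j) j').sub (isHomogeneous_C_mul_X (p j') j)⟩, ?_⟩
    simp [mul_comm]

lemma symbPow_witness {K : Type*} [Field K] {N n : ℕ} (hN : 1 ≤ N)
    (P : Fin n → Fin (N + 1) → K) (hP : ∀ i, P i ≠ 0) (m : ℕ) :
    ∃ d : ℕ, ∃ F ∈ symbPow P m, F ≠ 0 ∧ MvPolynomial.IsHomogeneous F d := by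
  choose L hL0 hLh hLmem using fun i => exists_linear hN (P i) (hP i)
  have hprod0 : (∏ i, L i) ≠ 0 := Finset.prod_ne_zero_iff.mpr fun i _ => hL0 i
  refine ⟨(∑ _i : Fin n, 1) * m, (∏ i, L i) ^ m, ?_, pow_ne_zero m hprod0,
    (IsHomogeneous.prod Finset.univ L (fun _ => 1) fun i _ => hLh i).pow m⟩
  rw [symbPow, Ideal.mem_iInf]
  intro i
  rw [← Finset.mul_prod_erase Finset.univ L (Finset.mem_univ i), mul_pow]
  exact Ideal.mul_mem_right _ _ (Ideal.pow_mem_pow (hLmem i) m)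

end Stmt5Aux

open Stmt5Aux

/-- If `I^{(t(m+N-1))} ⊆ M^{t(N-1)} (I^{(m)})^t` for all `m, t ≥ 1`, then
`(α(I^{(m)}) + N - 1)/(m + N - 1) ≤ α(I^{(t)})/t` for all `m, t ≥ 1`. -/
theorem stmt5 {K : Type*} [Field K] [IsAlgClosed K]
    {N n : ℕ} (hN : 1 ≤ N) (hn : 1 ≤ n)
    (P : Fin n → (Fin (N + 1) → K)) (hP : ProjectivelyDistinct P)
    (h : ∀ m t : ℕ, 1 ≤ m → 1 ≤ t →
      symbPow P (t * (m + N - 1)) ≤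
        irrel K (Fin (N + 1)) ^ (t * (N - 1)) * symbPow P m ^ t) :
    ∀ m t : ℕ, 1 ≤ m → 1 ≤ t →
      ((idealAlpha (symbPow P m) : ℚ) + (N : ℚ) - 1) / ((m : ℚ) + (N : ℚ) - 1) ≤
        (idealAlpha (symbPow P t) : ℚ) / (t : ℚ) := by
  obtain ⟨N', rfl⟩ : ∃ N', N = N' + 1 := ⟨N - 1, by omega⟩
  intro m t hm ht
  set am := idealAlpha (symbPow P m) with ham
  set at' := idealAlpha (symbPow P t) with hat
  set s := t * (m + (N' + 1) - 1) with hs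
  -- the degree-`α` witness of `symbPow P s`
  have hSs : {d : ℕ | ∃ F ∈ symbPow P s, F ≠ 0 ∧ MvPolynomial.IsHomogeneous F d}.Nonempty := by
    obtain ⟨d, hd⟩ := symbPow_witness hN P hP.1 s
    exact ⟨d, hd⟩
  obtain ⟨Fs, hFs, hFs0, hFsh⟩ := Nat.sInf_mem hSs
  -- lower bound : t * N' + t * am ≤ α(symbPow P s)
  have hFs' : Fs ∈ irrel K (Fin (N' + 1 + 1)) ^ (t * (N' + 1 - 1)) * symbPow P m ^ t :=
    h m t hm ht hFs
  have hlow : t * (N' + 1 - 1) * 1 + t * am ≤ idealAlpha (symbPow P s) := by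
    have hmul := alphaGE_mul (homog_pow homog_irrel (t * (N' + 1 - 1)))
      (homog_pow (homog_symbPow P m) t)
      (alphaGE_pow homog_irrel alphaGE_irrel (t * (N' + 1 - 1)))
      (alphaGE_pow (homog_symbPow P m) (alphaGE_symbPow P m) t)
    exact hmul Fs hFs' _ hFs0 hFsh
  -- upper bound : α(symbPow P s) ≤ at' * (m + N')
  have hSt : {d : ℕ | ∃ F ∈ symbPow P t, F ≠ 0 ∧ MvPolynomial.IsHomogeneous F d}.Nonempty := by
    obtain ⟨d, hd⟩ := symbPow_witness hN P hP.1 t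
    exact ⟨d, hd⟩
  obtain ⟨Ft, hFt, hFt0, hFth⟩ := Nat.sInf_mem hSt
  have hup : idealAlpha (symbPow P s) ≤ at' * (m + (N' + 1) - 1) := by
    apply Nat.sInf_le
    refine ⟨Ft ^ (m + (N' + 1) - 1), ?_, pow_ne_zero _ hFt0, hFth.pow _⟩
    rw [symbPow, Ideal.mem_iInf]
    intro i
    have hFti : Ft ∈ homVanishingIdeal (P i) ^ t := by
      rw [symbPow, Ideal.mem_iInf] at hFt
      exact hFt i
    have := Ideal.pow_mem_pow hFti (m + (N' + 1) - 1)
    rwa [← pow_mul, ← hs] at this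
  -- combine in ℕ
  have hkey : t * N' + t * am ≤ at' * (m + N') := by
    have h1 : t * (N' + 1 - 1) * 1 + t * am ≤ at' * (m + (N' + 1) - 1) := le_trans hlow hup
    simpa using h1
  -- pass to ℚ
  have htQ : (0 : ℚ) < t := by exact_mod_cast ht
  have hmQ : (0 : ℚ) < (m : ℚ) + (N' + 1 : ℚ) - 1 := by
    have : (1 : ℚ) ≤ (m : ℚ) := by exact_mod_cast hm
    linarith
  have hkeyQ : ((t * N' + t * am : ℕ) : ℚ) ≤ ((at' * (m + N') : ℕ) : ℚ) := by
    exact_mod_cast hkey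
  push_cast at hkeyQ ⊢
  rw [div_le_div_iff₀ hmQ htQ]
  nlinarith [hkeyQ]
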